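/- For density matrices P, Q (positive definite with trace 1), the symmetrized relative entropy satisfies H(P,Q) + H(Q,P) = ∫₀^∞ Tr[(P−Q)(Q+uI)⁻¹(P−Q)(P+uI)⁻¹] du, where H(P,Q) = Tr(P(log P − log Q)). -/

import Mathlib

open Matrix MeasureTheory
open scoped ComplexOrder

/-- Matrix logarithm via functional calculus (junk value `0` off the Hermitian matrices). -/
noncomputable def mlog {n : ℕ} (A : Matrix (Fin n) (Fin n) ℂ) :
    Matrix (Fin n) (Fin n) ℂ :=
  if h : A.IsHermitian then h.cfc Real.log else 0

/-- Quantum relative entropy `H(P,Q) = Tr (P (log P - log Q))`. -/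
noncomputable def relEnt {n : ℕ} (P Q : Matrix (Fin n) (Fin n) ℂ) : ℂ :=
  (P * (mlog P - mlog Q)).trace

section Aux

variable {n : ℕ}

lemma trace_mul_conj_diag (M U : Matrix (Fin n) (Fin n) ℂ) (d : Fin n → ℂ) :
    (M * (U * diagonal d * star U)).trace = ∑ i, d i * (star U * M * U) i i := by
  rw [show M * (U * diagonal d * star U) = M * U * diagonal d * star U by
      rw [← mul_assoc, ← mul_assoc],
    trace_mul_comm, ← mul_assoc, ← mul_assoc]
  simp [Matrix.trace, Matrix.diag, Matrix.mul_diagonal, Finset.mul_sum, mul_comm, mul_left_comm]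

lemma conj_diag {A : Matrix (Fin n) (Fin n) ℂ} (hA : A.IsHermitian) :
    star (hA.eigenvectorUnitary : Matrix (Fin n) (Fin n) ℂ) * A * (hA.eigenvectorUnitary : Matrix (Fin n) (Fin n) ℂ)
      = diagonal (fun i => ((hA.eigenvalues i : ℝ) : ℂ)) := by
  have h1 : star (hA.eigenvectorUnitary : Matrix (Fin n) (Fin n) ℂ) * (hA.eigenvectorUnitary : Matrix (Fin n) (Fin n) ℂ) = 1 :=
    Matrix.mem_unitaryGroup_iff'.mp (hA.eigenvectorUnitary).2
  calc star (hA.eigenvectorUnitary : Matrix (Fin n) (Fin n) ℂ) * A * (hA.eigenvectorUnitary : Matrix (Fin n) (Fin n) ℂ)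
      = star (hA.eigenvectorUnitary : Matrix (Fin n) (Fin n) ℂ) *
        ((hA.eigenvectorUnitary : Matrix (Fin n) (Fin n) ℂ) * diagonal (RCLike.ofReal ∘ hA.eigenvalues)
          * star (hA.eigenvectorUnitary : Matrix (Fin n) (Fin n) ℂ)) * (hA.eigenvectorUnitary : Matrix (Fin n) (Fin n) ℂ) := by
        have hs := hA.spectral_theorem
        rw [Unitary.conjStarAlgAut_apply] at hs
        rw [← hs]
    _ = diagonal (fun i => ((hA.eigenvalues i : ℝ) : ℂ)) := by
        simp only [← mul_assoc]
        rw [h1, one_mul, mul_assoc, h1, mul_one]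
        rfl

lemma add_smul_eq {A : Matrix (Fin n) (Fin n) ℂ} (hA : A.IsHermitian) (u : ℝ) :
    A + (u : ℂ) • 1 = (hA.eigenvectorUnitary : Matrix (Fin n) (Fin n) ℂ)
      * diagonal (fun i => ((hA.eigenvalues i + u : ℝ) : ℂ))
      * star (hA.eigenvectorUnitary : Matrix (Fin n) (Fin n) ℂ) := by
  have h2 : (hA.eigenvectorUnitary : Matrix (Fin n) (Fin n) ℂ) * star (hA.eigenvectorUnitary : Matrix (Fin n) (Fin n) ℂ) = 1 :=
    Matrix.mem_unitaryGroup_iff.mp (hA.eigenvectorUnitary).2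
  have h3 : (u : ℂ) • (1 : Matrix (Fin n) (Fin n) ℂ)
      = (hA.eigenvectorUnitary : Matrix (Fin n) (Fin n) ℂ) * ((u:ℂ) • 1) * star (hA.eigenvectorUnitary : Matrix (Fin n) (Fin n) ℂ) := by
    rw [mul_smul_comm, smul_mul_assoc, mul_one, h2]
  conv_lhs => rw [hA.spectral_theorem, h3]
  rw [Unitary.conjStarAlgAut_apply, ← Matrix.add_mul, ← Matrix.mul_add, Matrix.smul_one_eq_diagonal, diagonal_add]
  congr 1
  ext i
  push_cast
  simp

lemma mul_inv_add_smul {A : Matrix (Fin n) (Fin n) ℂ} (hA : A.PosDef) {u : ℝ} (hu : 0 < u) :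
    (A + (u : ℂ) • 1) * ((hA.1.eigenvectorUnitary : Matrix (Fin n) (Fin n) ℂ)
      * diagonal (fun i => (((hA.1.eigenvalues i + u)⁻¹ : ℝ) : ℂ))
      * star (hA.1.eigenvectorUnitary : Matrix (Fin n) (Fin n) ℂ)) = 1 := by
  have h1 : star (hA.1.eigenvectorUnitary : Matrix (Fin n) (Fin n) ℂ) * (hA.1.eigenvectorUnitary : Matrix (Fin n) (Fin n) ℂ) = 1 :=
    Matrix.mem_unitaryGroup_iff'.mp (hA.1.eigenvectorUnitary).2
  rw [add_smul_eq hA.1 u]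
  rw [show ∀ U D D' : Matrix (Fin n) (Fin n) ℂ,
      U * D * star U * (U * D' * star U) = U * (D * ((star U * U) * D')) * star U from
      fun U D D' => by simp only [mul_assoc], h1, one_mul, diagonal_mul_diagonal]
  have heq : (fun i => ((hA.1.eigenvalues i + u : ℝ) : ℂ) * (((hA.1.eigenvalues i + u)⁻¹ : ℝ) : ℂ)) = fun _ => (1:ℂ) := by
    funext i
    rw [← Complex.ofReal_mul, mul_inv_cancel₀ (by have := hA.eigenvalues_pos i; positivity), Complex.ofReal_one]
  rw [heq, diagonal_one, mul_one,
    Matrix.mem_unitaryGroup_iff.mp (hA.1.eigenvectorUnitary).2]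

lemma inv_add_smul {A : Matrix (Fin n) (Fin n) ℂ} (hA : A.PosDef) {u : ℝ} (hu : 0 < u) :
    (A + (u : ℂ) • 1)⁻¹ = (hA.1.eigenvectorUnitary : Matrix (Fin n) (Fin n) ℂ)
      * diagonal (fun i => (((hA.1.eigenvalues i + u)⁻¹ : ℝ) : ℂ))
      * star (hA.1.eigenvectorUnitary : Matrix (Fin n) (Fin n) ℂ) :=
  Matrix.inv_eq_right_inv (mul_inv_add_smul hA hu)

lemma mul_inv_self_add_smul {A : Matrix (Fin n) (Fin n) ℂ} (hA : A.PosDef) {u : ℝ} (hu : 0 < u) :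
    (A + (u : ℂ) • 1) * (A + (u : ℂ) • 1)⁻¹ = 1 := by
  rw [inv_add_smul hA hu]; exact mul_inv_add_smul hA hu

lemma inv_mul_self_add_smul {A : Matrix (Fin n) (Fin n) ℂ} (hA : A.PosDef) {u : ℝ} (hu : 0 < u) :
    (A + (u : ℂ) • 1)⁻¹ * (A + (u : ℂ) • 1) = 1 :=
  mul_eq_one_comm.mp (mul_inv_self_add_smul hA hu)

lemma scalar_deriv (p : ℝ) (hp : 0 < p) {x : ℝ} (hx : x ∈ Set.Ici (0:ℝ)) :
    HasDerivAt (fun u => Real.log (p+u) - Real.log (1+u)) ((p+x)⁻¹ - (1+x)⁻¹) x := by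
  have hx0 : (0:ℝ) ≤ x := hx
  have h1 : HasDerivAt (fun u : ℝ => Real.log (p+u)) ((p+x)⁻¹) x := by
    have := ((hasDerivAt_id x).const_add p).log (by positivity)
    simpa using this
  have h2 : HasDerivAt (fun u : ℝ => Real.log (1+u)) ((1+x)⁻¹) x := by
    have := ((hasDerivAt_id x).const_add 1).log (by positivity)
    simpa using this
  exact h1.sub h2

lemma scalar_tendsto (p : ℝ) (hp : 0 < p) :
    Filter.Tendsto (fun u => Real.log (p+u) - Real.log (1+u)) Filter.atTop (nhds 0) := by
  have h0 : Filter.Tendsto (fun u : ℝ => 1 + u) Filter.atTop Filter.atTop :=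
    Filter.tendsto_atTop_add_const_left _ 1 Filter.tendsto_id
  have h1 : Filter.Tendsto (fun u : ℝ => (p+u)/(1+u)) Filter.atTop (nhds 1) := by
    have hq : Filter.Tendsto (fun u : ℝ => (p-1)/(1+u)) Filter.atTop (nhds 0) :=
      h0.const_div_atTop _
    have : Filter.Tendsto (fun u : ℝ => 1 + (p-1)/(1+u)) Filter.atTop (nhds (1+0)) :=
      tendsto_const_nhds.add hq
    rw [add_zero] at this
    refine this.congr' ?_
    filter_upwards [Filter.eventually_ge_atTop (0:ℝ)] with u hu
    have h1u : (0:ℝ) < 1 + u := by linarith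
    field_simp
    ring
  have h2 : Filter.Tendsto (fun u : ℝ => Real.log ((p+u)/(1+u))) Filter.atTop (nhds 0) := by
    have := (Real.continuousAt_log one_ne_zero).tendsto.comp h1
    simpa [Function.comp_def] using this
  refine h2.congr' ?_
  filter_upwards [Filter.eventually_ge_atTop (0:ℝ)] with u hu
  rw [Real.log_div (by positivity) (by positivity)]

lemma scalar_integrable (p : ℝ) (hp : 0 < p) :
    IntegrableOn (fun u : ℝ => (p+u)⁻¹ - (1+u)⁻¹) (Set.Ioi 0) := by
  rcases le_total p 1 with h | h
  · exact integrableOn_Ioi_deriv_of_nonneg' (fun x hx => scalar_deriv p hp hx)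
      (fun x hx => by
        have hx0 : (0:ℝ) < x := hx
        have h' : p + x ≤ 1 + x := by linarith
        have := inv_anti₀ (show (0:ℝ) < p + x by positivity) h'
        linarith) (scalar_tendsto p hp)
  · exact integrableOn_Ioi_deriv_of_nonpos' (fun x hx => scalar_deriv p hp hx)
      (fun x hx => by
        have hx0 : (0:ℝ) < x := hx
        have h' : 1 + x ≤ p + x := by linarith
        have := inv_anti₀ (show (0:ℝ) < 1 + x by positivity) h'
        linarith) (scalar_tendsto p hp)

lemma scalar_integral (p : ℝ) (hp : 0 < p) :
    ∫ u in Set.Ioi (0:ℝ), ((p+u)⁻¹ - (1+u)⁻¹) = - Real.log p := by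
  have := integral_Ioi_of_hasDerivAt_of_tendsto' (fun x hx => scalar_deriv p hp hx)
    (scalar_integrable p hp) (scalar_tendsto p hp)
  simpa using this

lemma cx_integrable (c : ℂ) (a : ℝ) (ha : 0 < a) :
    IntegrableOn (fun u : ℝ => c * ((((a+u)⁻¹ - (1+u)⁻¹ : ℝ)) : ℂ)) (Set.Ioi 0) :=
  ((scalar_integrable a ha).ofReal).const_mul c

lemma cx_integral (c : ℂ) (a : ℝ) (ha : 0 < a) :
    ∫ u in Set.Ioi (0:ℝ), c * ((((a+u)⁻¹ - (1+u)⁻¹ : ℝ)) : ℂ)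
      = c * ((- Real.log a : ℝ) : ℂ) := by
  rw [MeasureTheory.integral_const_mul]
  congr 1
  rw [← scalar_integral a ha]
  exact integral_ofReal (𝕜 := ℂ)

end Aux

/-- Integral representation of the symmetrized relative entropy:
`H(P,Q) + H(Q,P) = ∫₀^∞ Tr [(P−Q)(Q+uI)⁻¹(P−Q)(P+uI)⁻¹] du` for density matrices `P, Q`. -/
theorem symmetrized_relEnt_integral {n : ℕ} (P Q : Matrix (Fin n) (Fin n) ℂ)
    (hP : P.PosDef) (hQ : Q.PosDef) (hPtr : P.trace = 1) (hQtr : Q.trace = 1) :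
    relEnt P Q + relEnt Q P
      = ∫ u in Set.Ioi (0 : ℝ),
          ((P - Q) * (Q + u • 1)⁻¹ * (P - Q) * (P + u • 1)⁻¹).trace := by
  classical
  have hsmul : ∀ u : ℝ, (u • (1 : Matrix (Fin n) (Fin n) ℂ)) = (u:ℂ) • 1 := by
    intro u; ext i j; simp [Matrix.smul_apply, Complex.real_smul]
  -- abbreviations
  let U : Matrix (Fin n) (Fin n) ℂ := (hP.1.eigenvectorUnitary : Matrix (Fin n) (Fin n) ℂ)
  let V : Matrix (Fin n) (Fin n) ℂ := (hQ.1.eigenvectorUnitary : Matrix (Fin n) (Fin n) ℂ)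
  let p : Fin n → ℝ := hP.1.eigenvalues
  let q : Fin n → ℝ := hQ.1.eigenvalues
  let r : Fin n → ℂ := fun i => (star U * Q * U) i i
  let s : Fin n → ℂ := fun j => (star V * P * V) j j
  have hUU : U * star U = 1 := Matrix.mem_unitaryGroup_iff.mp (hP.1.eigenvectorUnitary).2
  have hVV : V * star V = 1 := Matrix.mem_unitaryGroup_iff.mp (hQ.1.eigenvectorUnitary).2
  have hpdiag : star U * P * U = diagonal (fun i => ((p i : ℝ) : ℂ)) := conj_diag hP.1
  have hqdiag : star V * Q * V = diagonal (fun j => ((q j : ℝ) : ℂ)) := conj_diag hQ.1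
  have hppos : ∀ i, 0 < p i := hP.eigenvalues_pos
  have hqpos : ∀ j, 0 < q j := hQ.eigenvalues_pos
  -- sum facts
  have hpsum : ∑ i, ((p i : ℝ) : ℂ) = 1 := by
    have := congrArg Matrix.trace hpdiag
    rw [Matrix.trace_mul_cycle, hUU, one_mul, hPtr, Matrix.trace_diagonal] at this
    exact this.symm
  have hqsum : ∑ j, ((q j : ℝ) : ℂ) = 1 := by
    have := congrArg Matrix.trace hqdiag
    rw [Matrix.trace_mul_cycle, hVV, one_mul, hQtr, Matrix.trace_diagonal] at this
    exact this.symm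
  have hrsum : ∑ i, r i = 1 := by
    have : ∑ i, r i = (star U * Q * U).trace := by simp [r, Matrix.trace, Matrix.diag]
    rw [this, Matrix.trace_mul_cycle, hUU, one_mul, hQtr]
  have hssum : ∑ j, s j = 1 := by
    have : ∑ j, s j = (star V * P * V).trace := by simp [s, Matrix.trace, Matrix.diag]
    rw [this, Matrix.trace_mul_cycle, hVV, one_mul, hPtr]
  -- LHS computation
  have hmlogP : mlog P = U * diagonal (fun i => ((Real.log (p i) : ℝ) : ℂ)) * star U := by
    rw [mlog, dif_pos hP.1]; rfl
  have hmlogQ : mlog Q = V * diagonal (fun j => ((Real.log (q j) : ℝ) : ℂ)) * star V := by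
    rw [mlog, dif_pos hQ.1]; rfl
  have hL : relEnt P Q + relEnt Q P
      = (∑ i, ((Real.log (p i) : ℂ) * ((p i : ℝ) : ℂ) - (Real.log (p i) : ℂ) * r i))
        + ∑ j, ((Real.log (q j) : ℂ) * ((q j : ℝ) : ℂ) - (Real.log (q j) : ℂ) * s j) := by
    rw [relEnt, relEnt, mul_sub, mul_sub, Matrix.trace_sub, Matrix.trace_sub,
      hmlogP, hmlogQ, trace_mul_conj_diag P U, trace_mul_conj_diag Q V,
      trace_mul_conj_diag P V, trace_mul_conj_diag Q U, hpdiag, hqdiag]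
    simp only [diagonal_apply_eq]
    rw [Finset.sum_sub_distrib, Finset.sum_sub_distrib]
    ring
  -- pointwise integrand computation
  have hInt : ∀ u ∈ Set.Ioi (0:ℝ),
      ((P - Q) * (Q + u • 1)⁻¹ * (P - Q) * (P + u • 1)⁻¹).trace
        = (∑ i, (r i - ((p i : ℝ) : ℂ)) * ((((p i + u)⁻¹ - (1+u)⁻¹ : ℝ)) : ℂ))
          + ∑ j, (s j - ((q j : ℝ) : ℂ)) * ((((q j + u)⁻¹ - (1+u)⁻¹ : ℝ)) : ℂ) := by
    intro u hu
    have hu0 : (0:ℝ) < u := hu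
    rw [hsmul]
    set B := Q + (u:ℂ) • 1 with hB
    set C := P + (u:ℂ) • 1 with hC
    have hres : B⁻¹ * (P - Q) * C⁻¹ = B⁻¹ - C⁻¹ := by
      have hPQ : P - Q = C - B := by rw [hB, hC]; abel
      rw [hPQ, Matrix.mul_sub, Matrix.sub_mul, mul_assoc,
        mul_inv_self_add_smul hP hu0, mul_one, inv_mul_self_add_smul hQ hu0, one_mul]
    have hassoc : (P - Q) * B⁻¹ * (P - Q) * C⁻¹ = (P - Q) * (B⁻¹ * (P - Q) * C⁻¹) := by
      simp only [mul_assoc]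
    rw [hassoc, hres, Matrix.mul_sub, Matrix.trace_sub,
      inv_add_smul hQ hu0, inv_add_smul hP hu0,
      trace_mul_conj_diag _ V, trace_mul_conj_diag _ U]
    have hPQU : ∀ i, (star U * (P - Q) * U) i i = ((p i : ℝ) : ℂ) - r i := by
      intro i
      have : star U * (P - Q) * U = star U * P * U - star U * Q * U := by
        rw [Matrix.mul_sub, Matrix.sub_mul]
      rw [this, Matrix.sub_apply, hpdiag, diagonal_apply_eq]
    have hPQV : ∀ j, (star V * (P - Q) * V) j j = s j - ((q j : ℝ) : ℂ) := by
      intro j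
      have : star V * (P - Q) * V = star V * P * V - star V * Q * V := by
        rw [Matrix.mul_sub, Matrix.sub_mul]
      rw [this, Matrix.sub_apply, hqdiag, diagonal_apply_eq]
    simp only [hPQU, hPQV]
    -- now pure sum algebra, using zero-sum facts
    have hz1 : ∑ i, (r i - ((p i : ℝ) : ℂ)) = 0 := by
      rw [Finset.sum_sub_distrib, hrsum, hpsum, sub_self]
    have hz2 : ∑ j, (s j - ((q j : ℝ) : ℂ)) = 0 := by
      rw [Finset.sum_sub_distrib, hssum, hqsum, sub_self]
    have expand1 : ∀ i, (r i - ((p i : ℝ) : ℂ)) * ((((p i + u)⁻¹ - (1+u)⁻¹ : ℝ)) : ℂ)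
        = ((((p i + u)⁻¹ : ℝ)) : ℂ) * (((p i : ℝ) : ℂ) - r i) * (-1)
          - (r i - ((p i : ℝ) : ℂ)) * (((1+u)⁻¹ : ℝ) : ℂ) := by
      intro i; push_cast; ring
    have expand2 : ∀ j, (s j - ((q j : ℝ) : ℂ)) * ((((q j + u)⁻¹ - (1+u)⁻¹ : ℝ)) : ℂ)
        = ((((q j + u)⁻¹ : ℝ)) : ℂ) * (s j - ((q j : ℝ) : ℂ))
          - (s j - ((q j : ℝ) : ℂ)) * (((1+u)⁻¹ : ℝ) : ℂ) := by
      intro j; push_cast; ring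
    simp only [expand1, expand2, Finset.sum_sub_distrib, ← Finset.sum_mul, hz1, hz2,
      zero_mul, sub_zero]
    ring
  -- integral computation
  rw [MeasureTheory.setIntegral_congr_fun measurableSet_Ioi hInt]
  have hint1 : ∀ i : Fin n, IntegrableOn
      (fun u : ℝ => (r i - ((p i : ℝ) : ℂ)) * ((((p i + u)⁻¹ - (1+u)⁻¹ : ℝ)) : ℂ)) (Set.Ioi 0) :=
    fun i => cx_integrable _ _ (hppos i)
  have hint2 : ∀ j : Fin n, IntegrableOn
      (fun u : ℝ => (s j - ((q j : ℝ) : ℂ)) * ((((q j + u)⁻¹ - (1+u)⁻¹ : ℝ)) : ℂ)) (Set.Ioi 0) :=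
    fun j => cx_integrable _ _ (hqpos j)
  rw [MeasureTheory.integral_add
      (MeasureTheory.integrable_finset_sum _ (fun i _ => hint1 i))
      (MeasureTheory.integrable_finset_sum _ (fun j _ => hint2 j)),
    MeasureTheory.integral_finset_sum _ (fun i _ => hint1 i),
    MeasureTheory.integral_finset_sum _ (fun j _ => hint2 j)]
  simp only [fun i : Fin n => cx_integral (r i - ((p i : ℝ) : ℂ)) (p i) (hppos i),
    fun j : Fin n => cx_integral (s j - ((q j : ℝ) : ℂ)) (q j) (hqpos j)]
  rw [hL]
  push_cast
  congr 1
  · apply Finset.sum_congr rfl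
    intro i _
    ring
  · apply Finset.sum_congr rfl
    intro j _
    ring
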